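/- In the odd polynomial algebra OPol_{n+1}, for any m ≥ 0 one has x_{n+1}^{m+n+1} = -Σ_{q=0}^{n} (Σ_{r=0}^{m} (-1)^{m+n+1-q-r} h_r^{(n+1)} e_{m+n+1-q-r}^{(n+1)}) x_{n+1}^{q}, where e_s^{(n+1)} and h_s^{(n+1)} denote the odd elementary and complete symmetric polynomials in x_1,…,x_{n+1}. -/

import Mathlib

open scoped Classical

noncomputable section

/-- The odd elementary symmetric polynomial
`e_r = ∑_{i_1 < ⋯ < i_r} x_{i_1} ⋯ x_{i_r}`. -/
def oddElem {A : Type*} [Ring A] {N : ℕ} (x : Fin N → A) (r : ℕ) : A :=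
  ∑ s ∈ Finset.powersetCard r (Finset.univ : Finset (Fin N)),
    ((s.sort (· ≤ ·)).map x).prod

/-- The odd complete symmetric polynomial
`h_r = ∑_{i_r ≥ ⋯ ≥ i_1} x_{i_r} ⋯ x_{i_1}`, the weakly increasing sequences
`i_1 ≤ ⋯ ≤ i_r` being encoded as monotone functions `Fin r → Fin N`. -/
def oddComplete {A : Type*} [Ring A] {N : ℕ} (x : Fin N → A) (r : ℕ) : A :=
  ∑ f ∈ Finset.univ.filter (fun f : Fin r → Fin N => Monotone f),
    ((List.ofFn fun i => x (f i)).reverse).prod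

namespace Stmt17Aux

variable {A : Type*} [Ring A]

/-! ### Generalities -/

lemma neg_pow_comm (i : ℕ) (a : A) : a * (-1 : A) ^ i = (-1 : A) ^ i * a := by
  have h : ((-1 : A)) = ((-1 : ℤ) : A) := by simp
  rw [h, ← Int.cast_pow]
  exact (Int.cast_commute _ a).symm

lemma neg_pow_left (i : ℕ) (a b : A) :
    a * ((-1 : A) ^ i * b) = (-1 : A) ^ i * (a * b) := by
  rw [← mul_assoc, neg_pow_comm, mul_assoc]

lemma neg_pow_succ (i : ℕ) (a : A) : (-1 : A) ^ (i + 1) * a = -((-1 : A) ^ i * a) := by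
  rw [pow_succ, mul_assoc, neg_one_mul, mul_neg]

lemma neg_pow_sub {t K : ℕ} (h : t ≤ K) :
    ((-1 : A)) ^ (K - t) = (-1 : A) ^ K * (-1 : A) ^ t := by
  have h2 : (-1 : A) ^ K = (-1 : A) ^ (K - t) * (-1 : A) ^ t := by
    rw [← pow_add]; congr 1; omega
  rw [h2, mul_assoc, ← pow_add]
  have : Even (t + t) := ⟨t, rfl⟩
  rw [this.neg_one_pow, mul_one]

lemma neg_pow_cancel (k : ℕ) (a : A) : (-1 : A) ^ k * ((-1 : A) ^ k * a) = a := by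
  rw [← mul_assoc, ← pow_add]
  have : Even (k + k) := ⟨k, rfl⟩
  rw [this.neg_one_pow, one_mul]

lemma sum_range_add' (f : ℕ → A) (a b : ℕ) :
    ∑ i ∈ Finset.range (a + b), f i
      = (∑ i ∈ Finset.range a, f i) + ∑ j ∈ Finset.range b, f (a + j) := by
  induction b with
  | zero => simp
  | succ b ih =>
      rw [← Nat.add_assoc, Finset.sum_range_succ, ih, Finset.sum_range_succ, add_assoc]

/-! ### Basic values -/

lemma oddElem_zero {N : ℕ} (x : Fin N → A) : oddElem x 0 = 1 := by
  simp [oddElem]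

lemma oddComplete_zero {N : ℕ} (x : Fin N → A) : oddComplete x 0 = 1 := by
  unfold oddComplete
  have h : (Finset.univ.filter (fun f : Fin 0 → Fin N => Monotone f)) = Finset.univ := by
    ext f; simp [Monotone]
  rw [h]
  simp [Finset.card_univ]

lemma oddElem_eq_zero {N r : ℕ} (x : Fin N → A) (h : N < r) : oddElem x r = 0 := by
  unfold oddElem
  rw [Finset.powersetCard_eq_empty.2 (by simpa using h)]
  simp

lemma oddElem_base (x : Fin 0 → A) (r : ℕ) : oddElem x (r + 1) = 0 :=
  oddElem_eq_zero x (Nat.succ_pos r)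

lemma oddComplete_base (x : Fin 0 → A) (r : ℕ) : oddComplete x (r + 1) = 0 := by
  unfold oddComplete
  rw [Finset.univ_eq_empty]
  simp

/-! ### Sorting lemmas -/

lemma sort_map {n : ℕ} (s : Finset (Fin n)) :
    (s.map Fin.castSuccOrderEmb.toEmbedding).sort (· ≤ ·) =
      (s.sort (· ≤ ·)).map Fin.castSucc := by
  refine (fun hp h1 h2 => List.Perm.eq_of_pairwise' (r := ((· ≤ ·) : Fin (n+1) → Fin (n+1) → Prop)) h1 h2 hp) ?_ ?_ ?_
  · rw [← Multiset.coe_eq_coe]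
    have h1 : ((s.map Fin.castSuccOrderEmb.toEmbedding).sort (· ≤ ·) : Multiset (Fin (n+1)))
        = (s.map Fin.castSuccOrderEmb.toEmbedding).val := Finset.sort_eq _ _
    have h4 : s.val = ↑(s.sort (· ≤ ·)) := (Finset.sort_eq _ _).symm
    rw [h1, Finset.map_val, h4, Multiset.map_coe]
    simp
    exact List.Perm.refl _
  · exact Finset.pairwise_sort _ _
  · rw [List.pairwise_map]
    exact (Finset.pairwise_sort _ _).imp (fun h => by simpa using h)

lemma sort_snoc {n : ℕ} (s : Finset (Fin (n+1))) (h : Fin.last n ∉ s) :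
    (insert (Fin.last n) s).sort (· ≤ ·) = s.sort (· ≤ ·) ++ [Fin.last n] := by
  refine (fun hp h1 h2 => List.Perm.eq_of_pairwise' (r := ((· ≤ ·) : Fin (n+1) → Fin (n+1) → Prop)) h1 h2 hp) ?_ ?_ ?_
  · have h1 : ((insert (Fin.last n) s).sort (· ≤ ·) : Multiset (Fin (n+1)))
        = (insert (Fin.last n) s).val := Finset.sort_eq _ _
    have h2 : (insert (Fin.last n) s).val = Fin.last n ::ₘ s.val :=
      Finset.insert_val_of_notMem h
    have h3 : ((insert (Fin.last n) s).sort (· ≤ ·) : Multiset (Fin (n+1)))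
        = ↑(Fin.last n :: s.sort (· ≤ ·)) := by
      rw [h1, h2, ← Finset.sort_eq s (· ≤ ·)]; rfl
    exact (Multiset.coe_eq_coe.mp h3).trans (List.perm_append_singleton _ _).symm
  · exact Finset.pairwise_sort _ _
  · rw [List.pairwise_append]
    refine ⟨Finset.pairwise_sort _ _, List.pairwise_singleton _ _, ?_⟩
    intro a _ b hb
    rw [List.mem_singleton] at hb
    subst hb
    exact Fin.le_last a

/-! ### The two structural recursions -/

lemma sum_pcard {n : ℕ} (x : Fin (n+1) → A) (k : ℕ) :
    ∑ t ∈ Finset.powersetCard k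
        ((Finset.univ : Finset (Fin n)).map Fin.castSuccOrderEmb.toEmbedding),
      ((t.sort (· ≤ ·)).map x).prod = oddElem (x ∘ Fin.castSucc) k := by
  rw [Finset.powersetCard_map, Finset.sum_map]
  unfold oddElem
  apply Finset.sum_congr rfl
  intro u _
  have h0 : (Finset.mapEmbedding Fin.castSuccOrderEmb.toEmbedding).toEmbedding u
      = u.map Fin.castSuccOrderEmb.toEmbedding := rfl
  rw [h0, sort_map, List.map_map]

lemma oddElem_succ {n : ℕ} (x : Fin (n+1) → A) (r : ℕ) :
    oddElem x (r+1) =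
      oddElem (x ∘ Fin.castSucc) (r+1) + oddElem (x ∘ Fin.castSucc) r * x (Fin.last n) := by
  have hemb : (Fin.castSuccEmb : Fin n ↪ Fin (n+1)) = Fin.castSuccOrderEmb.toEmbedding := by
    ext a; rfl
  set U := (Finset.univ : Finset (Fin n)).map Fin.castSuccOrderEmb.toEmbedding with hU
  have hlast : Fin.last n ∉ U := by
    simp only [hU, Finset.mem_map]
    rintro ⟨a, -, ha⟩
    exact absurd ha (Fin.castSucc_lt_last a).ne
  have huniv : (Finset.univ : Finset (Fin (n+1))) = insert (Fin.last n) U := by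
    rw [Fin.univ_castSuccEmb, Finset.cons_eq_insert, hemb]
  have hdisj : Disjoint (Finset.powersetCard (r+1) U)
      ((Finset.powersetCard r U).image (insert (Fin.last n))) := by
    rw [Finset.disjoint_left]
    intro t ht ht'
    obtain ⟨u, hu, rfl⟩ := Finset.mem_image.mp ht'
    have := (Finset.mem_powersetCard.mp ht).1 (Finset.mem_insert_self _ _)
    exact hlast this
  conv_lhs => rw [oddElem, huniv, Finset.powersetCard_succ_insert hlast, Finset.sum_union hdisj]
  congr 1
  · exact sum_pcard x (r+1)
  · have hinj : ∀ t1 ∈ Finset.powersetCard r U, ∀ t2 ∈ Finset.powersetCard r U,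
        insert (Fin.last n) t1 = insert (Fin.last n) t2 → t1 = t2 := by
      intro t1 h1 t2 h2 h
      have e1 : Fin.last n ∉ t1 := fun hc => hlast ((Finset.mem_powersetCard.mp h1).1 hc)
      have e2 : Fin.last n ∉ t2 := fun hc => hlast ((Finset.mem_powersetCard.mp h2).1 hc)
      rw [← Finset.erase_insert e1, ← Finset.erase_insert e2, h]
    rw [Finset.sum_image hinj]
    have hterm : ∀ t ∈ Finset.powersetCard r U,
        (((insert (Fin.last n) t).sort (· ≤ ·)).map x).prod
          = ((t.sort (· ≤ ·)).map x).prod * x (Fin.last n) := by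
      intro t ht
      have e1 : Fin.last n ∉ t := fun hc => hlast ((Finset.mem_powersetCard.mp ht).1 hc)
      rw [sort_snoc t e1, List.map_append, List.prod_append]
      simp
    rw [Finset.sum_congr rfl hterm, ← Finset.sum_mul, sum_pcard x r]

lemma monotone_snoc {n r : ℕ} (g : Fin r → Fin (n+1)) (hg : Monotone g) :
    Monotone (Fin.snoc g (Fin.last n)) := by
  intro a b hab
  rcases Fin.eq_castSucc_or_eq_last b with ⟨b', rfl⟩ | rfl
  · rcases Fin.eq_castSucc_or_eq_last a with ⟨a', rfl⟩ | rfl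
    · rw [Fin.snoc_castSucc, Fin.snoc_castSucc]
      exact hg (by exact_mod_cast hab)
    · exact absurd hab (Fin.not_le.2 (Fin.castSucc_lt_last b'))
  · rw [Fin.snoc_last]
    exact Fin.le_last _

lemma oddComplete_succ {n : ℕ} (x : Fin (n+1) → A) (r : ℕ) :
    oddComplete x (r+1) =
      x (Fin.last n) * oddComplete x r + oddComplete (x ∘ Fin.castSucc) (r+1) := by
  unfold oddComplete
  rw [← Finset.sum_filter_add_sum_filter_not
    (Finset.univ.filter (fun f : Fin (r+1) → Fin (n+1) => Monotone f))
    (fun f => f (Fin.last r) = Fin.last n)]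
  congr 1
  · rw [Finset.mul_sum]
    refine Finset.sum_nbij' (fun f => f ∘ Fin.castSucc) (fun g => Fin.snoc g (Fin.last n))
      ?_ ?_ ?_ ?_ ?_
    · intro f hf
      simp only [Finset.mem_filter, Finset.mem_univ, true_and] at hf ⊢
      exact hf.1.comp Fin.strictMono_castSucc.monotone
    · intro g hg
      simp only [Finset.mem_filter, Finset.mem_univ, true_and] at hg ⊢
      exact ⟨monotone_snoc g hg, Fin.snoc_last _ _⟩
    · intro f hf
      simp only [Finset.mem_filter, Finset.mem_univ, true_and] at hf
      funext i
      rcases Fin.eq_castSucc_or_eq_last i with ⟨i', rfl⟩ | rfl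
      · simp
      · simp [hf.2]
    · intro g hg
      funext i
      simp
    · intro f hf
      simp only [Finset.mem_filter, Finset.mem_univ, true_and] at hf
      rw [List.ofFn_succ', List.concat_eq_append, List.reverse_append]
      simp only [List.reverse_cons, List.reverse_nil, List.nil_append, List.singleton_append,
        List.prod_cons, hf.2]
      rfl
  · have key : ∀ f : Fin (r+1) → Fin (n+1),
        f ∈ (Finset.univ.filter (fun f : Fin (r+1) → Fin (n+1) => Monotone f)).filter
          (fun f => ¬ f (Fin.last r) = Fin.last n) → ∀ k, f k ≠ Fin.last n := by
      intro f hf k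
      simp only [Finset.mem_filter, Finset.mem_univ, true_and] at hf
      have h1 : f k ≤ f (Fin.last r) := hf.1 (Fin.le_last k)
      have h2 : f (Fin.last r) < Fin.last n := lt_of_le_of_ne (Fin.le_last _) hf.2
      exact (lt_of_le_of_lt h1 h2).ne
    refine Finset.sum_bij' (i := fun f hf => fun k => (f k).castPred (key f hf k))
      (j := fun (g : Fin (r+1) → Fin n) _ => Fin.castSucc ∘ g) ?_ ?_ ?_ ?_ ?_
    · intro f hf
      simp only [Finset.mem_filter, Finset.mem_univ, true_and] at hf ⊢
      intro a b hab
      have h := hf.1 hab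
      rw [Fin.le_def] at h ⊢
      simpa using h
    · intro g hg
      simp only [Finset.mem_filter, Finset.mem_univ, true_and] at hg ⊢
      constructor
      · exact Fin.strictMono_castSucc.monotone.comp hg
      · simp only [Function.comp_apply]
        exact (Fin.castSucc_lt_last _).ne
    · intro f hf
      funext k
      simp [Fin.castSucc_castPred]
    · intro g hg
      funext k
      simp [Fin.castPred_castSucc]
    · intro f hf
      rfl

/-! ### The convolution identity -/

/-- `F_k = ∑_{s=0}^{k} (-1)^s h_s e_{k-s}`. -/
def Fc {N : ℕ} (x : Fin N → A) (k : ℕ) : A :=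
  ∑ s ∈ Finset.range (k+1), (-1 : A) ^ s * (oddComplete x s * oddElem x (k - s))

lemma Frec {n : ℕ} (x : Fin (n+1) → A) (K : ℕ) :
    Fc x (K+1) + x (Fin.last n) * Fc x K
      = Fc (x ∘ Fin.castSucc) (K+1) + Fc (x ∘ Fin.castSucc) K * x (Fin.last n) := by
  set X := x (Fin.last n) with hX
  set x' := x ∘ Fin.castSucc with hx'
  have hL : Fc x (K+1) + X * Fc x K
      = (∑ i ∈ Finset.range (K+1),
          (-1 : A) ^ (i+1) * (oddComplete x' (i+1) * oddElem x (K - i)))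
        + oddElem x (K+1) := by
    rw [Fc, Finset.sum_range_succ']
    simp only [Nat.succ_sub_succ_eq_sub, pow_zero, one_mul, Nat.sub_zero, oddComplete_zero]
    have hterm : ∀ i ∈ Finset.range (K+1),
        (-1 : A) ^ (i+1) * (oddComplete x (i+1) * oddElem x (K - i))
        = -(X * ((-1 : A) ^ i * (oddComplete x i * oddElem x (K - i))))
          + (-1 : A) ^ (i+1) * (oddComplete x' (i+1) * oddElem x (K - i)) := by
      intro i _
      rw [oddComplete_succ, ← hX, ← hx', add_mul, mul_add, neg_pow_succ, mul_assoc,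
        ← neg_pow_left]
    rw [Finset.sum_congr rfl hterm, Finset.sum_add_distrib, Finset.sum_neg_distrib,
      ← Finset.mul_sum]
    have : Fc x K = ∑ i ∈ Finset.range (K+1),
        (-1 : A) ^ i * (oddComplete x i * oddElem x (K - i)) := rfl
    rw [← this]
    abel
  rw [hL]
  -- now handle the right-hand side
  have hsplit : (∑ i ∈ Finset.range (K+1),
      (-1 : A) ^ (i+1) * (oddComplete x' (i+1) * oddElem x (K - i)))
      = (∑ i ∈ Finset.range K,
          (-1 : A) ^ (i+1) * (oddComplete x' (i+1) * oddElem x' (K - i)))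
        + (∑ i ∈ Finset.range K,
            ((-1 : A) ^ (i+1) * (oddComplete x' (i+1) * oddElem x' (K - (i+1)))) * X)
        + (-1 : A) ^ (K+1) * (oddComplete x' (K+1) * oddElem x 0) := by
    rw [Finset.sum_range_succ, Nat.sub_self]
    congr 1
    have hterm : ∀ i ∈ Finset.range K,
        (-1 : A) ^ (i+1) * (oddComplete x' (i+1) * oddElem x (K - i))
        = (-1 : A) ^ (i+1) * (oddComplete x' (i+1) * oddElem x' (K - i))
          + ((-1 : A) ^ (i+1) * (oddComplete x' (i+1) * oddElem x' (K - (i+1)))) * X := by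
      intro i hi
      rw [Finset.mem_range] at hi
      have h1 : K - i = (K - (i+1)) + 1 := by omega
      rw [h1, oddElem_succ, ← hx', ← hX, ← h1]
      simp only [mul_add, mul_assoc]
    rw [Finset.sum_congr rfl hterm, Finset.sum_add_distrib]
  rw [hsplit]
  have hE : oddElem x (K+1) = oddElem x' (K+1) + oddElem x' K * X := by
    rw [oddElem_succ, ← hx', ← hX]
  rw [hE]
  have hR1 : Fc x' (K+1) = (∑ i ∈ Finset.range K,
      (-1 : A) ^ (i+1) * (oddComplete x' (i+1) * oddElem x' (K - i)))
      + (-1 : A) ^ (K+1) * (oddComplete x' (K+1) * oddElem x' 0) + oddElem x' (K+1) := by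
    rw [Fc, Finset.sum_range_succ']
    simp only [Nat.succ_sub_succ_eq_sub, pow_zero, one_mul, Nat.sub_zero, oddComplete_zero]
    rw [Finset.sum_range_succ, Nat.sub_self]
  have hR2 : Fc x' K * X = (∑ i ∈ Finset.range K,
      ((-1 : A) ^ (i+1) * (oddComplete x' (i+1) * oddElem x' (K - (i+1)))) * X)
      + oddElem x' K * X := by
    rw [Fc, Finset.sum_range_succ']
    simp only [pow_zero, one_mul, Nat.sub_zero, oddComplete_zero]
    rw [add_mul, Finset.sum_mul]
  rw [hR1, hR2]
  have h0 : (oddElem x 0 : A) = oddElem x' 0 := by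
    rw [oddElem_zero, oddElem_zero]
  rw [h0]
  abel

lemma conv {N : ℕ} (x : Fin N → A) (k : ℕ) :
    Fc x k = if k = 0 then (1 : A) else 0 := by
  induction N generalizing k with
  | zero =>
      cases k with
      | zero => simp [Fc, oddComplete_zero, oddElem_zero]
      | succ K =>
          rw [if_neg (Nat.succ_ne_zero K)]
          apply Finset.sum_eq_zero
          intro s hs
          cases s with
          | zero => simp [oddComplete_zero, oddElem_base]
          | succ t => simp [oddComplete_base]
  | succ n ih =>
      induction k with
      | zero => simp [Fc, oddComplete_zero, oddElem_zero]
      | succ K ihk =>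
          have h := Frec x K
          rw [ihk, ih (x ∘ Fin.castSucc) (K+1), ih (x ∘ Fin.castSucc) K,
            if_neg (Nat.succ_ne_zero K)] at h
          rw [if_neg (Nat.succ_ne_zero K)]
          rcases Nat.eq_zero_or_pos K with rfl | hK
          · norm_num at h
            simpa using h
          · rw [if_neg hK.ne'] at h
            simpa using h

/-! ### The odd Cayley–Hamilton identity -/

lemma cayley {n : ℕ} (x : Fin (n+1) → A) :
    ∑ s ∈ Finset.range (n+2), (-1 : A) ^ s * (oddElem x s * x (Fin.last n) ^ (n+1-s)) = 0 := by
  set X := x (Fin.last n) with hX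
  set x' := x ∘ Fin.castSucc with hx'
  set T : ℕ → A := fun s => (-1 : A) ^ s * (oddElem x' s * X ^ (n+1-s)) with hT
  have hterm : ∀ i ∈ Finset.range (n+1),
      (-1 : A) ^ (i+1) * (oddElem x (i+1) * X ^ (n+1-(i+1))) = T (i+1) - T i := by
    intro i hi
    rw [Finset.mem_range] at hi
    rw [oddElem_succ, ← hx', ← hX, hT]
    simp only []
    rw [add_mul, mul_add, neg_pow_succ ]
    have h1 : n + 1 - (i+1) = n - i := by omega
    have h2 : oddElem x' i * X * X ^ (n - i) = oddElem x' i * X ^ (n+1-i) := by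
      rw [mul_assoc, ← pow_succ']
      congr 2
      omega
    rw [h1, h2, neg_pow_succ]
    abel
  rw [Finset.sum_range_succ']
  rw [Finset.sum_congr rfl hterm, Finset.sum_range_sub]
  have hT0 : T 0 = (-1 : A) ^ 0 * (oddElem x 0 * X ^ (n+1-0)) := by
    rw [hT]; simp [oddElem_zero]
  have hTn : T (n+1) = 0 := by
    rw [hT]
    simp only []
    rw [oddElem_eq_zero _ (Nat.lt_succ_self n)]
    simp
  rw [hTn, hT0]
  simp [oddElem_zero]

lemma cayley' {n : ℕ} (x : Fin (n+1) → A) :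
    x (Fin.last n) ^ (n+1)
      = ∑ j ∈ Finset.range (n+1),
          (-1 : A) ^ (n - j) * (oddElem x (n+1-j) * x (Fin.last n) ^ j) := by
  set X := x (Fin.last n) with hX
  have h := cayley x
  rw [Finset.sum_range_succ'] at h
  simp only [pow_zero, one_mul, Nat.sub_zero, oddElem_zero] at h
  have h2 : X ^ (n+1) = -∑ i ∈ Finset.range (n+1),
      (-1 : A) ^ (i+1) * (oddElem x (i+1) * X ^ (n+1-(i+1))) := by
    rw [eq_neg_iff_add_eq_zero, add_comm]
    exact h
  rw [h2, ← Finset.sum_neg_distrib]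
  rw [← Finset.sum_range_reflect]
  apply Finset.sum_congr rfl
  intro j hj
  rw [Finset.mem_range] at hj
  have h3 : n + 1 - 1 - j = n - j := by omega
  rw [h3, neg_pow_succ, neg_neg]
  have e2 : n + 1 - (n - j + 1) = j := by omega
  rw [e2]
  have e3 : n - j + 1 = n + 1 - j := by omega
  rw [e3]

/-! ### The main recursion -/

/-- `d_k^q = ∑_{t=0}^{n-q} (-1)^{n-q-t} h_{k+t} e_{n-q-t}`. -/
def dd {n : ℕ} (x : Fin (n+1) → A) (k q : ℕ) : A :=
  ∑ t ∈ Finset.range (n+1-q), (-1 : A) ^ (n-q-t) * (oddComplete x (k+t) * oddElem x (n-q-t))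

/-- `G_k = ∑_{q=0}^{n} d_k^q X^q`. -/
def G {n : ℕ} (x : Fin (n+1) → A) (k : ℕ) : A :=
  ∑ q ∈ Finset.range (n+1), dd x k q * x (Fin.last n) ^ q

lemma dd_top {n : ℕ} (x : Fin (n+1) → A) (k : ℕ) : dd x k n = oddComplete x k := by
  rw [dd]
  have h : n + 1 - n = 1 := by omega
  rw [h, Finset.sum_range_one]
  simp [oddElem_zero]

lemma convK {n : ℕ} (x : Fin (n+1) → A) (k : ℕ) :
    ∑ t ∈ Finset.range (n+2), (-1 : A) ^ t * (oddComplete x (k+t) * oddElem x (n+1-t)) = 0 := by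
  have h := conv x (k+n+1)
  rw [if_neg (by omega), Fc] at h
  have hsplit : k + n + 1 + 1 = k + (n + 2) := by omega
  rw [hsplit, sum_range_add' _ k (n+2)] at h
  have hz : ∑ s ∈ Finset.range k,
      (-1 : A) ^ s * (oddComplete x s * oddElem x (k + n + 1 - s)) = 0 := by
    apply Finset.sum_eq_zero
    intro s hs
    rw [Finset.mem_range] at hs
    rw [oddElem_eq_zero _ (by omega)]
    simp
  rw [hz, zero_add] at h
  have hcong : ∀ t ∈ Finset.range (n+2),
      (-1 : A) ^ (k + t) * (oddComplete x (k + t) * oddElem x (k + n + 1 - (k + t)))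
      = (-1 : A) ^ k * ((-1 : A) ^ t * (oddComplete x (k+t) * oddElem x (n+1-t))) := by
    intro t ht
    have he : k + n + 1 - (k + t) = n + 1 - t := by omega
    rw [he, pow_add, mul_assoc]
  rw [Finset.sum_congr rfl hcong, ← Finset.mul_sum] at h
  have := congrArg (fun a => (-1 : A) ^ k * a) h
  simpa [neg_pow_cancel] using this

lemma dd_zero_succ {n : ℕ} (x : Fin (n+1) → A) (k : ℕ) :
    dd x (k+1) 0 = (-1 : A) ^ n * (oddComplete x k * oddElem x (n+1)) := by
  have h := convK x k
  rw [Finset.sum_range_succ'] at h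
  simp only [pow_zero, one_mul, Nat.add_zero, Nat.sub_zero] at h
  have hcong : ∀ t ∈ Finset.range (n+1),
      (-1 : A) ^ (t+1) * (oddComplete x (k+(t+1)) * oddElem x (n+1-(t+1)))
      = -((-1 : A) ^ t * (oddComplete x (k+1+t) * oddElem x (n-t))) := by
    intro t ht
    have a1 : k + (t + 1) = k + 1 + t := by omega
    have a2 : n + 1 - (t + 1) = n - t := by omega
    rw [neg_pow_succ, a1, a2]
  rw [Finset.sum_congr rfl hcong, Finset.sum_neg_distrib, neg_add_eq_zero] at h
  have h2 : ∑ t ∈ Finset.range (n+1),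
      (-1 : A) ^ t * (oddComplete x (k+1+t) * oddElem x (n-t))
      = oddComplete x k * oddElem x (n+1) := h
  rw [dd]
  simp only [Nat.sub_zero]
  have hcong2 : ∀ t ∈ Finset.range (n+1),
      (-1 : A) ^ (n-t) * (oddComplete x (k+1+t) * oddElem x (n-t))
      = (-1 : A) ^ n * ((-1 : A) ^ t * (oddComplete x (k+1+t) * oddElem x (n-t))) := by
    intro t ht
    rw [Finset.mem_range] at ht
    rw [neg_pow_sub (by omega), mul_assoc]
  rw [Finset.sum_congr rfl hcong2, ← Finset.mul_sum, h2]

lemma dd_rec {n : ℕ} (x : Fin (n+1) → A) (k i : ℕ) (hi : i < n) :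
    dd x k i = (-1 : A) ^ (n-i) * (oddComplete x k * oddElem x (n-i)) + dd x (k+1) (i+1) := by
  rw [dd, dd]
  have h1 : n + 1 - i = (n - i - 1 + 1) + 1 := by omega
  have h2 : n + 1 - (i + 1) = n - i - 1 + 1 := by omega
  rw [h1, h2, Finset.sum_range_succ', add_comm]
  congr 1
  · apply Finset.sum_congr rfl
    intro t ht
    have a1 : n - i - (t + 1) = n - (i + 1) - t := by omega
    have a2 : k + (t + 1) = k + 1 + t := by omega
    rw [a1, a2]

lemma G_zero {n : ℕ} (x : Fin (n+1) → A) : G x 0 = x (Fin.last n) ^ n := by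
  rw [G]
  have hdd : ∀ q ∈ Finset.range (n+1), dd x 0 q * x (Fin.last n) ^ q
      = if q = n then x (Fin.last n) ^ n else 0 := by
    intro q hq
    rw [Finset.mem_range] at hq
    have hform : dd x 0 q = (-1 : A) ^ (n-q) * Fc x (n-q) := by
      rw [dd, Fc, Finset.mul_sum]
      have h1 : n + 1 - q = (n - q) + 1 := by omega
      rw [h1]
      apply Finset.sum_congr rfl
      intro t ht
      rw [Finset.mem_range] at ht
      rw [neg_pow_sub (show t ≤ n - q by omega), mul_assoc, Nat.zero_add]
    rw [hform, conv]
    rcases eq_or_ne q n with rfl | hqn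
    · simp
    · rw [if_neg (by omega), if_neg hqn]
      simp
  rw [Finset.sum_congr rfl hdd, Finset.sum_ite_eq' (Finset.range (n+1)) n]
  rw [if_pos (Finset.self_mem_range_succ n)]

lemma G_rec {n : ℕ} (x : Fin (n+1) → A) (k : ℕ) :
    G x (k+1) = G x k * x (Fin.last n) := by
  set X := x (Fin.last n) with hX
  have hR : G x k * X = ∑ q ∈ Finset.range (n+1), dd x k q * X ^ (q+1) := by
    rw [G, Finset.sum_mul]
    apply Finset.sum_congr rfl
    intro q _
    rw [mul_assoc, ← pow_succ]
  have hR2 : ∑ q ∈ Finset.range (n+1), dd x k q * X ^ (q+1)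
      = (∑ q ∈ Finset.range n, dd x k q * X ^ (q+1)) + oddComplete x k * X ^ (n+1) := by
    rw [Finset.sum_range_succ, dd_top]
  have hcay : oddComplete x k * X ^ (n+1)
      = ∑ j ∈ Finset.range (n+1),
          ((-1 : A) ^ (n-j) * (oddComplete x k * oddElem x (n+1-j))) * X ^ j := by
    rw [cayley', Finset.mul_sum]
    apply Finset.sum_congr rfl
    intro j _
    rw [neg_pow_left, ← mul_assoc (oddComplete x k), ← mul_assoc]
  have hR4 : ∑ j ∈ Finset.range (n+1),
      ((-1 : A) ^ (n-j) * (oddComplete x k * oddElem x (n+1-j))) * X ^ j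
      = (∑ i ∈ Finset.range n,
          ((-1 : A) ^ (n-(i+1)) * (oddComplete x k * oddElem x (n+1-(i+1)))) * X ^ (i+1))
        + (-1 : A) ^ n * (oddComplete x k * oddElem x (n+1)) := by
    rw [Finset.sum_range_succ']
    simp only [pow_zero, Nat.sub_zero, mul_one]
  have hL : G x (k+1) = (∑ i ∈ Finset.range n, dd x (k+1) (i+1) * X ^ (i+1))
      + dd x (k+1) 0 := by
    rw [G, Finset.sum_range_succ']
    simp only [pow_zero, mul_one]
    rfl
  rw [hL, hR, hR2, hcay, hR4, dd_zero_succ, ← add_assoc]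
  congr 1
  rw [← Finset.sum_add_distrib]
  apply Finset.sum_congr rfl
  intro i hi
  rw [Finset.mem_range] at hi
  rw [← add_mul]
  congr 1
  rw [dd_rec x k i hi]
  have hsign : (-1 : A) ^ (n - (i+1)) = -(-1 : A) ^ (n-i) := by
    have h1 : n - i = (n - (i+1)) + 1 := by omega
    rw [h1, pow_succ]
    simp
  rw [hsign]
  have h2 : n + 1 - (i+1) = n - i := by omega
  rw [h2, neg_mul, add_right_comm]
  simp

lemma G_pow {n : ℕ} (x : Fin (n+1) → A) (m : ℕ) :
    x (Fin.last n) ^ (m + n + 1) = G x (m+1) := by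
  induction m with
  | zero =>
      rw [G_rec, G_zero, ← pow_succ]
      congr 1
      omega
  | succ m ih =>
      rw [G_rec, ← ih, ← pow_succ]
      congr 1
      omega

end Stmt17Aux

open Stmt17Aux in
/-- In the odd polynomial algebra `OPol_{n+1}` (formalized inside any algebra with
`n+1` anticommuting odd variables), for any `m ≥ 0`:
`x_{n+1}^{m+n+1} = -∑_{q=0}^{n} (∑_{r=0}^{m} (-1)^{m+n+1-q-r} h_r e_{m+n+1-q-r}) x_{n+1}^q`. -/
theorem statement17 {A : Type*} [Ring A] (n : ℕ) (x : Fin (n + 1) → A)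
    (hx : ∀ i j : Fin (n + 1), i < j → x j * x i = -(x i * x j)) (m : ℕ) :
    x (Fin.last n) ^ (m + n + 1) =
      -∑ q ∈ Finset.range (n + 1),
        (∑ r ∈ Finset.range (m + 1),
            (-1 : A) ^ (m + n + 1 - q - r) *
              (oddComplete x r * oddElem x (m + n + 1 - q - r))) *
          x (Fin.last n) ^ q := by
  rw [G_pow x m, G, ← Finset.sum_neg_distrib]
  apply Finset.sum_congr rfl
  intro q hq
  rw [Finset.mem_range] at hq
  rw [← neg_mul]
  congr 1
  -- dd x (m+1) q = -(c_q)
  have key : (∑ r ∈ Finset.range (m + 1),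
      (-1 : A) ^ (m + n + 1 - q - r) * (oddComplete x r * oddElem x (m + n + 1 - q - r)))
      + dd x (m+1) q = 0 := by
    set K := m + n + 1 - q with hK
    have hdd : dd x (m+1) q = ∑ t ∈ Finset.range (n+1-q),
        (-1 : A) ^ (K - (m+1+t)) * (oddComplete x (m+1+t) * oddElem x (K - (m+1+t))) := by
      rw [dd]
      apply Finset.sum_congr rfl
      intro t ht
      rw [Finset.mem_range] at ht
      have : K - (m+1+t) = n - q - t := by omega
      rw [this]
    have hc : ∀ r ∈ Finset.range (m+1),
        (-1 : A) ^ (m + n + 1 - q - r) * (oddComplete x r * oddElem x (m + n + 1 - q - r))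
        = (-1 : A) ^ (K - r) * (oddComplete x r * oddElem x (K - r)) := by
      intro r hr
      have : m + n + 1 - q - r = K - r := by omega
      rw [this]
    rw [Finset.sum_congr rfl hc, hdd]
    have htot : (∑ r ∈ Finset.range (m+1),
        (-1 : A) ^ (K - r) * (oddComplete x r * oddElem x (K - r)))
        + ∑ t ∈ Finset.range (n+1-q),
            (-1 : A) ^ (K - (m+1+t)) * (oddComplete x (m+1+t) * oddElem x (K - (m+1+t)))
        = ∑ r ∈ Finset.range (K+1),
            (-1 : A) ^ (K - r) * (oddComplete x r * oddElem x (K - r)) := by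
      have hKq : K + 1 = (m+1) + (n+1-q) := by omega
      rw [hKq, sum_range_add' (fun r => (-1 : A) ^ (K - r) * (oddComplete x r * oddElem x (K - r)))
        (m+1) (n+1-q)]
    rw [htot]
    have hsigns : ∀ r ∈ Finset.range (K+1),
        (-1 : A) ^ (K - r) * (oddComplete x r * oddElem x (K - r))
        = (-1 : A) ^ K * ((-1 : A) ^ r * (oddComplete x r * oddElem x (K - r))) := by
      intro r hr
      rw [Finset.mem_range] at hr
      rw [neg_pow_sub (by omega), mul_assoc]
    rw [Finset.sum_congr rfl hsigns, ← Finset.mul_sum]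
    have hFc : (∑ r ∈ Finset.range (K+1),
        (-1 : A) ^ r * (oddComplete x r * oddElem x (K - r))) = Fc x K := rfl
    rw [hFc, conv, if_neg (by omega), mul_zero]
  exact eq_neg_of_add_eq_zero_right key
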